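/- Let H be a complex Hilbert space with positive bounded operator A. For all a, b, e ∈ H with ‖e‖_A = 1 and every α ∈ [0,1], one has ( |⟨a,e⟩_A| + |⟨e,b⟩_A| )² ≤ √( ‖a‖_A⁴ + ‖b‖_A⁴ + 2|⟨a,b⟩_A|² ) + (1+α) ‖a‖_A ‖b‖_A + (1−α) |⟨a,b⟩_A|. -/

import Mathlib

open scoped InnerProductSpace

variable {H : Type*} [NormedAddCommGroup H] [InnerProductSpace ℂ H] [CompleteSpace H]

/-- The `A`-semi-inner product `⟪x, y⟫_A = ⟪A x, y⟫`. -/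
noncomputable def ipA (A : H →L[ℂ] H) (x y : H) : ℂ := ⟪A x, y⟫_ℂ

/-- The `A`-semi-norm `‖x‖_A = √(re ⟪A x, x⟫)`. -/
noncomputable def nA (A : H →L[ℂ] H) (x : H) : ℝ := Real.sqrt (ipA A x x).re

section Aux

variable (A : H →L[ℂ] H)

lemma ipA_symm (hA : A.IsPositive) (x y : H) : ipA A y x = (starRingEnd ℂ) (ipA A x y) := by
  have hsym := hA.1
  unfold ipA
  rw [← inner_conj_symm]
  congr 1
  exact (hsym x y).symm

lemma abs_ipA_symm (hA : A.IsPositive) (x y : H) :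
    ‖ipA A y x‖ = ‖ipA A x y‖ := by
  rw [ipA_symm A hA, Complex.norm_conj]

lemma ipA_self_re_nonneg (hA : A.IsPositive) (x : H) : 0 ≤ (ipA A x x).re := hA.2 x

lemma nA_nonneg (x : H) : 0 ≤ nA A x := Real.sqrt_nonneg _

lemma nA_sq (hA : A.IsPositive) (x : H) : nA A x ^ 2 = (ipA A x x).re :=
  Real.sq_sqrt (ipA_self_re_nonneg A hA x)

/-- The pre-inner-product core given by a positive operator. -/
noncomputable def coreA (hA : A.IsPositive) : PreInnerProductSpace.Core ℂ H where
  inner x y := ipA A x y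
  conj_inner_symm x y := (ipA_symm A hA y x).symm
  re_inner_nonneg x := hA.2 x
  add_left x y z := by simp [ipA, map_add, inner_add_left]
  smul_left x y r := by simp [ipA, map_smul, inner_smul_left, mul_comm]

/-- Cauchy–Schwarz for the `A`-semi-inner product. -/
lemma abs_ipA_le (hA : A.IsPositive) (x y : H) : ‖ipA A x y‖ ≤ nA A x * nA A y := by
  have h := @InnerProductSpace.Core.inner_mul_inner_self_le ℂ H _ _ _ (coreA A hA) x y
  have h2 : ‖ipA A x y‖ * ‖ipA A y x‖
      ≤ (ipA A x x).re * (ipA A y y).re := h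
  rw [abs_ipA_symm A hA x y] at h2
  rw [← nA_sq A hA x, ← nA_sq A hA y] at h2
  have habs : 0 ≤ ‖ipA A x y‖ := norm_nonneg _
  nlinarith [nA_nonneg A x, nA_nonneg A y,
    mul_nonneg (nA_nonneg A x) (nA_nonneg A y)]

end Aux

set_option maxHeartbeats 1000000 in
theorem stmt8 (A : H →L[ℂ] H) (hA : A.IsPositive) (a b e : H) (he : nA A e = 1)
    (α : ℝ) (hα : α ∈ Set.Icc (0 : ℝ) 1) :
    (‖ipA A a e‖ + ‖ipA A e b‖) ^ 2 ≤
      Real.sqrt (nA A a ^ 4 + nA A b ^ 4 + 2 * ‖ipA A a b‖ ^ 2) +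
        (1 + α) * (nA A a * nA A b) + (1 - α) * ‖ipA A a b‖ := by
  obtain ⟨hα0, hα1⟩ := hα
  set l := ipA A a e with hl
  set m := ipA A b e with hm
  set w := ipA A e b with hw
  set z := ipA A a b with hz
  set p := ‖l‖ with hp
  set q := ‖m‖ with hq
  set Z := ‖z‖ with hZ
  set na := nA A a with hna
  set nb := nA A b with hnb
  set S := na ^ 4 + nb ^ 4 + 2 * Z ^ 2 with hS
  have hp0 : 0 ≤ p := norm_nonneg _
  have hq0 : 0 ≤ q := norm_nonneg _
  have hZ0 : 0 ≤ Z := norm_nonneg _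
  have hna0 : 0 ≤ na := nA_nonneg A a
  have hnb0 : 0 ≤ nb := nA_nonneg A b
  have hS0 : (0:ℝ) ≤ S := by
    have h1 := mul_nonneg (sq_nonneg na) (sq_nonneg na)
    have h2 := mul_nonneg (sq_nonneg nb) (sq_nonneg nb)
    have h3 := sq_nonneg Z
    rw [hS]; nlinarith [pow_le_pow_left₀ hna0 (le_refl na) 4]
  have hs2 : Real.sqrt S ^ 2 = S := Real.sq_sqrt hS0
  have hsq0 : 0 ≤ Real.sqrt S := Real.sqrt_nonneg _
  have hwm : ‖w‖ = q := by
    rw [hw, hq, hm, abs_ipA_symm A hA b e]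
  have hna2 : na ^ 2 = (ipA A a a).re := nA_sq A hA a
  have hnb2 : nb ^ 2 = (ipA A b b).re := nA_sq A hA b
  -- the element `u`
  set u := l • a + m • b with hu
  have hue : ipA A u e = ((p ^ 2 + q ^ 2 : ℝ) : ℂ) := by
    have h1 : ipA A u e = (starRingEnd ℂ) l * l + (starRingEnd ℂ) m * m := by
      simp only [hu, ipA, map_add, map_smul, inner_add_left, inner_smul_left]
      rfl
    rw [h1, Complex.conj_mul', Complex.conj_mul',
      ← hp, ← hq]
    push_cast
    ring
  have huenA : p ^ 2 + q ^ 2 ≤ nA A u := by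
    have h2 := abs_ipA_le A hA u e
    rw [hue, he, mul_one] at h2
    have : ‖((p ^ 2 + q ^ 2 : ℝ) : ℂ)‖ = p ^ 2 + q ^ 2 := by
      rw [Complex.norm_real, Real.norm_eq_abs, abs_of_nonneg (add_nonneg (sq_nonneg p) (sq_nonneg q))]
    linarith [this ▸ h2]
  have hba : ipA A b a = (starRingEnd ℂ) z := by rw [hz, ipA_symm A hA a b]
  have huu : (ipA A u u).re ≤ p ^ 2 * na ^ 2 + q ^ 2 * nb ^ 2 + 2 * (p * q * Z) := by
    have h3 : ipA A u u = ((p ^ 2 : ℝ) : ℂ) * ipA A a a + ((q ^ 2 : ℝ) : ℂ) * ipA A b b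
        + ((starRingEnd ℂ) l * m * z + (starRingEnd ℂ) ((starRingEnd ℂ) l * m * z)) := by
      have h4 : ipA A u u = (starRingEnd ℂ) l * l * ipA A a a
          + (starRingEnd ℂ) l * m * ipA A a b + (starRingEnd ℂ) m * l * ipA A b a
          + (starRingEnd ℂ) m * m * ipA A b b := by
        simp only [hu, ipA, map_add, map_smul, inner_add_left, inner_add_right,
          inner_smul_left, inner_smul_right]
        ring
      rw [h4, hba, Complex.conj_mul', Complex.conj_mul',
        ← hp, ← hq, ← hz]
      simp only [map_mul, Complex.conj_conj]
      push_cast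
      ring
    have h5 : (ipA A u u).re = p ^ 2 * (ipA A a a).re + q ^ 2 * (ipA A b b).re
        + 2 * ((starRingEnd ℂ) l * m * z).re := by
      rw [h3]
      simp only [Complex.add_re, Complex.add_conj, Complex.mul_re, Complex.mul_im,
        ← Complex.ofReal_pow, Complex.ofReal_re, Complex.ofReal_im]
      ring
    have h6 : ((starRingEnd ℂ) l * m * z).re ≤ p * q * Z := by
      calc ((starRingEnd ℂ) l * m * z).re ≤ ‖(starRingEnd ℂ) l * m * z‖ :=
            Complex.re_le_norm _
        _ = p * q * Z := by simp [norm_mul, hp, hq, hZ]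
    rw [h5, ← hna2, ← hnb2]
    nlinarith
  have hlag : p ^ 2 * na ^ 2 + q ^ 2 * nb ^ 2 + 2 * (p * q * Z)
      ≤ (p ^ 2 + q ^ 2) * Real.sqrt S := by
    have hdot0 : 0 ≤ p ^ 2 * na ^ 2 + q ^ 2 * nb ^ 2 + 2 * (p * q * Z) := by
      have h1 := mul_nonneg (mul_nonneg hp0 hq0) hZ0
      have h2 := mul_nonneg (sq_nonneg p) (sq_nonneg na)
      have h3 := mul_nonneg (sq_nonneg q) (sq_nonneg nb)
      linarith
    have hcs2 : (p ^ 2 * na ^ 2 + q ^ 2 * nb ^ 2 + 2 * (p * q * Z)) ^ 2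
        ≤ (p ^ 2 + q ^ 2) ^ 2 * S := by
      rw [hS]
      nlinarith [sq_nonneg (p ^ 2 * nb ^ 2 - q ^ 2 * na ^ 2),
        sq_nonneg (p ^ 2 * Z - p * q * na ^ 2), sq_nonneg (q ^ 2 * Z - p * q * nb ^ 2)]
    nlinarith [mul_nonneg (mul_nonneg (add_nonneg (sq_nonneg p) (sq_nonneg q))
      (add_nonneg (sq_nonneg p) (sq_nonneg q))) hsq0, sq_nonneg (p ^ 2 + q ^ 2),
      mul_nonneg (add_nonneg (sq_nonneg p) (sq_nonneg q)) hsq0]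
  have hsum : p ^ 2 + q ^ 2 ≤ Real.sqrt S := by
    have h7 : nA A u ^ 2 ≤ (p ^ 2 + q ^ 2) * Real.sqrt S := by
      rw [nA_sq A hA u]; linarith
    rcases eq_or_lt_of_le (add_nonneg (sq_nonneg p) (sq_nonneg q)) with h | h
    · linarith
    · nlinarith [huenA, nA_nonneg A u]
  -- Buzano part
  have hee : ipA A e e = 1 := by
    have him : ipA A e e = (starRingEnd ℂ) (ipA A e e) := ipA_symm A hA e e
    have hre : (ipA A e e).re = 1 := by
      have h8 := nA_sq A hA e
      rw [he] at h8; linarith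
    have him0 : (ipA A e e).im = 0 := by
      have := congrArg Complex.im him
      simp only [Complex.conj_im] at this
      linarith
    exact Complex.ext (by simp [hre]) (by simp [him0])
  set b' := (2 * w) • e - b with hb'
  have h9 : ipA A a b' = 2 * w * l - z := by
    simp only [hb', hl, hz, hw, ipA, inner_sub_right, inner_smul_right]
  have h10 : ipA A b' b' = ipA A b b := by
    have hbe : ipA A b e = (starRingEnd ℂ) w := by rw [hw, ipA_symm A hA e b]
    have h11 : ipA A b' b' = (starRingEnd ℂ) (2 * w) * (2 * w) * ipA A e e
        - (starRingEnd ℂ) (2 * w) * ipA A e b - 2 * w * ipA A b e + ipA A b b := by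
      simp only [hb', ipA, map_sub, map_smul, inner_sub_left, inner_sub_right,
        inner_smul_left, inner_smul_right]
      ring
    rw [h11, hee, hbe, ← hw]
    simp only [map_mul, map_ofNat]
    ring
  have hnb' : nA A b' = nb := by
    rw [hnb, nA, nA, h10]
  have hbuz : 2 * (p * q) ≤ na * nb + Z := by
    have h12 : ‖ipA A a b'‖ ≤ na * nb := by
      have := abs_ipA_le A hA a b'
      rwa [hnb', ← hna] at this
    have h13 : ‖2 * w * l‖ ≤ na * nb + Z := by
      have h14 : 2 * w * l = ipA A a b' + z := by rw [h9]; ring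
      rw [h14]
      calc ‖ipA A a b' + z‖ ≤ ‖ipA A a b'‖ + Z :=
            norm_add_le _ _
        _ ≤ na * nb + Z := by linarith
    have h15 : ‖2 * w * l‖ = 2 * (p * q) := by
      simp only [norm_mul, Complex.norm_two, hwm, ← hp]
      ring
    linarith [h15 ▸ h13]
  -- individual Cauchy–Schwarz bounds
  have hpa : p ≤ na := by
    have := abs_ipA_le A hA a e
    rwa [he, mul_one, ← hna, ← hl, ← hp] at this
  have hqb : q ≤ nb := by
    have := abs_ipA_le A hA e b
    rwa [he, one_mul, ← hnb, ← hw, hwm] at this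
  have hpq : p * q ≤ na * nb := mul_le_mul hpa hqb hq0 hna0
  -- conclude
  rw [hwm]
  nlinarith [mul_nonneg hα0 (sub_nonneg.mpr hpq),
    mul_nonneg (sub_nonneg.mpr hα1) (sub_nonneg.mpr hbuz)]
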